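/- Let M : L(H_{S'} ⊗ H_R) → L(H_S ⊗ H_Q) be a completely positive linear map between operator spaces over finite-dimensional Hilbert spaces, with H_S ≅ H_{S'}. Then the loop composition M^{S↪S'} : L(H_R) → L(H_Q), defined by M^{S↪S'}(ρ) := Σ_{i,j} ⟨i|_S M(ρ ⊗ |i⟩⟨j|_{S'}) |j⟩_S, is also completely positive. -/

import Mathlib

open Kronecker Matrix
open scoped ComplexOrder

/-- The extension `Φ ⊗ id_{L(ℂⁿ)}` of a map `Φ : L(H_α) → L(H_β)` (valid for
linear `Φ`), acting entrywise on the `ℂⁿ` indices. -/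
noncomputable def cpExt {α β : Type*} [Fintype α] [Fintype β]
    (Φ : Matrix α α ℂ → Matrix β β ℂ) (n : ℕ)
    (X : Matrix (α × Fin n) (α × Fin n) ℂ) :
    Matrix (β × Fin n) (β × Fin n) ℂ :=
  Matrix.of fun p q =>
    Φ (Matrix.of fun a a' => X (a, p.2) (a', q.2)) p.1 q.1

/-- Complete positivity: `Φ ⊗ id_{L(ℂⁿ)}` maps positive semidefinite operators
to positive semidefinite operators, for every `n`. -/
def IsCompletelyPositive {α β : Type*} [Fintype α] [Fintype β]
    (Φ : Matrix α α ℂ → Matrix β β ℂ) : Prop :=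
  ∀ (n : ℕ) (X : Matrix (α × Fin n) (α × Fin n) ℂ),
    X.PosSemidef → (cpExt Φ n X).PosSemidef

/-- Loop composition `S ↪ S'` over the first tensor factor:
`M^{S↪S'}(ρ) := Σ_{i,j} ⟨i|_S M(|i⟩⟨j|_{S'} ⊗ ρ) |j⟩_S`. -/
noncomputable def loopComp {s r q : Type*}
    [Fintype s] [DecidableEq s] [Fintype r] [Fintype q]
    (M : Matrix (s × r) (s × r) ℂ → Matrix (s × q) (s × q) ℂ)
    (ρ : Matrix r r ℂ) : Matrix q q ℂ :=
  Matrix.of fun k l =>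
    ∑ i : s, ∑ j : s, M (Matrix.single i j (1 : ℂ) ⊗ₖ ρ) (i, k) (j, l)

section aux


variable {s : Type*} [Fintype s] [DecidableEq s] {n m : ℕ}

noncomputable def embMat (e : s × Fin n ≃ Fin m) (α : Type*) [DecidableEq α] :
    Matrix ((s × α) × Fin m) (α × Fin n) ℂ :=
  Matrix.of fun P b =>
    if (e.symm P.2).1 = P.1.1 ∧ b = (P.1.2, (e.symm P.2).2) then 1 else 0

lemma embMat_apply (e : s × Fin n ≃ Fin m) {α : Type*} [DecidableEq α]
    (P : (s × α) × Fin m) (b : α × Fin n) :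
    embMat e α P b =
      if (e.symm P.2).1 = P.1.1 ∧ b = (P.1.2, (e.symm P.2).2) then 1 else 0 := rfl

lemma Zentry {r : Type*} [Fintype r] [DecidableEq r]
    (e : s × Fin n ≃ Fin m) (X : Matrix (r × Fin n) (r × Fin n) ℂ)
    (P Q : (s × r) × Fin m) :
    (embMat e r * X * (embMat e r)ᴴ) P Q =
      if (e.symm P.2).1 = P.1.1 ∧ (e.symm Q.2).1 = Q.1.1 then
        X (P.1.2, (e.symm P.2).2) (Q.1.2, (e.symm Q.2).2) else 0 := by
  simp [embMat, Matrix.mul_apply, Matrix.conjTranspose_apply, ite_and,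
    Finset.sum_ite_eq, Finset.sum_ite_eq', mul_comm]
  split_ifs <;> simp

end aux

/-- Loop composition preserves complete positivity: if
`M : L(H_S' ⊗ H_R) → L(H_S ⊗ H_Q)` is a completely positive linear map with
`H_S ≅ H_S'`, then `M^{S↪S'} : L(H_R) → L(H_Q)` is completely positive. -/
theorem loop_composition_preserves_complete_positivity
    {s r q : Type*} [Fintype s] [DecidableEq s]
    [Fintype r] [DecidableEq r] [Fintype q] [DecidableEq q]
    (M : Matrix (s × r) (s × r) ℂ →ₗ[ℂ] Matrix (s × q) (s × q) ℂ)
    (hM : IsCompletelyPositive (fun X => M X)) :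
    IsCompletelyPositive (loopComp (fun X => M X)) := by
  intro n X hX
  set m := Fintype.card (s × Fin n) with hm
  set e : s × Fin n ≃ Fin m := Fintype.equivFin (s × Fin n) with he
  set Z := embMat e r * X * (embMat e r)ᴴ with hZdef
  have hZ : Z.PosSemidef := hX.mul_mul_conjTranspose_same _
  have hA := hM m Z hZ
  have key : cpExt (loopComp fun X => M X) n X =
      (embMat e q)ᴴ * cpExt (fun X => M X) m Z * embMat e q := by
    ext ⟨k, p⟩ ⟨l, p'⟩
    have reidx : ∀ (g : Fin m → ℂ), (∑ pm, g pm) = ∑ c : s × Fin n, g (e c) :=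
      fun g => (Equiv.sum_comp e g).symm
    have slice : ∀ i j : s,
        (Matrix.of fun a a' : s × r => Z (a, e (i, p)) (a', e (j, p'))) =
          Matrix.single i j (1 : ℂ) ⊗ₖ
            (Matrix.of fun b b' : r => X (b, p) (b', p')) := by
      intro i j
      ext ⟨i', a⟩ ⟨j', a'⟩
      simp [hZdef, Zentry, Matrix.single, Matrix.kroneckerMap_apply, eq_comm]
    simp only [cpExt, loopComp, Matrix.of_apply, Matrix.mul_apply,
      Matrix.conjTranspose_apply, Fintype.sum_prod_type, reidx, embMat_apply,
      Equiv.symm_apply_apply]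
    simp [Prod.mk.injEq, ite_and, Finset.sum_ite_eq, Finset.sum_ite_eq', slice,
      apply_ite (starRingEnd ℂ), ite_mul, zero_mul, one_mul]
    exact Finset.sum_comm
  rw [key]
  exact hA.conjTranspose_mul_mul_same _
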